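/- Let (V1,…,Vn) be a U_n-twisted isometry on H and A ⊆ {1,…,n}. The A-wandering subspace D_A = ⋂_{l} V_{A^c}^l(W_A) reduces every U_{st} (s ≠ t), and U_{st}(D_A) = D_A. -/

import Mathlib

open ContinuousLinearMap

theorem stmt_18 {H : Type*} [NormedAddCommGroup H] [InnerProductSpace ℂ H] [CompleteSpace H]
    {n : ℕ} (U : Fin n → Fin n → (H →L[ℂ] H)) (V : Fin n → (H →L[ℂ] H))
    (hUu : ∀ i j, i ≠ j → U i j * adjoint (U i j) = 1 ∧ adjoint (U i j) * U i j = 1)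
    (hUsym : ∀ i j, i ≠ j → U j i = adjoint (U i j))
    (hUcomm : ∀ i j s t, i ≠ j → s ≠ t → U i j * U s t = U s t * U i j)
    (hViso : ∀ i, adjoint (V i) * V i = 1)
    (hVU : ∀ p s t, s ≠ t → V p * U s t = U s t * V p)
    (htw : ∀ i j, i ≠ j → adjoint (V i) * V j = adjoint (U i j) * (V j * adjoint (V i)))
    (A : Finset (Fin n))
    (W : Submodule ℂ H) (hW : W = ⨅ i ∈ A, LinearMap.ker (adjoint (V i)).toLinearMap)
    (D : Submodule ℂ H)
    (hD : D = ⨅ l : Fin n → ℕ,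
      Submodule.map
        (((List.finRange n).filter (fun j => decide (j ∉ A))).map
          (fun j => V j ^ l j)).prod.toLinearMap W) :
    ∀ s t, s ≠ t →
      (∀ x ∈ D, U s t x ∈ D ∧ adjoint (U s t) x ∈ D) ∧
        Submodule.map (U s t).toLinearMap D = D := by
  intro s t hst
  set u := U s t with hu
  obtain ⟨hu1, hu2⟩ := hUu s t hst
  -- u commutes with every V p
  have hcV : ∀ p, Commute u (V p) := fun p => (hVU p s t hst).symm
  -- adjoint u commutes with every V p
  have hcVstar : ∀ p, Commute (adjoint u) (V p) := by
    intro p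
    have h : adjoint u * V p = V p * adjoint u := by
      calc adjoint u * V p = adjoint u * V p * (u * adjoint u) := by rw [hu1, mul_one]
        _ = adjoint u * (V p * u) * adjoint u := by simp only [mul_assoc]
        _ = adjoint u * (u * V p) * adjoint u := by rw [hVU p s t hst]
        _ = (adjoint u * u) * (V p * adjoint u) := by simp only [mul_assoc]
        _ = V p * adjoint u := by rw [hu2, one_mul]
    exact h
  -- u commutes with every adjoint (V p)
  have hcadjV : ∀ p, Commute u (adjoint (V p)) := by
    intro p
    have h := congrArg star (hcVstar p).eq
    simp only [star_mul, star_eq_adjoint, adjoint_adjoint] at h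
    exact h.symm
  -- adjoint u commutes with every adjoint (V p)
  have hcadjVstar : ∀ p, Commute (adjoint u) (adjoint (V p)) := by
    intro p
    have h := congrArg star (hcV p).eq
    simp only [star_mul, star_eq_adjoint, adjoint_adjoint] at h
    exact h.symm
  -- membership in W
  have hWmem : ∀ x : H, x ∈ W ↔ ∀ i ∈ A, adjoint (V i) x = 0 := by
    intro x
    simp [hW, Submodule.mem_iInf, LinearMap.mem_ker]
  -- any operator commuting with all adjoint (V p) preserves W
  have hWu : ∀ (w : H →L[ℂ] H), (∀ p, Commute w (adjoint (V p))) → ∀ x ∈ W, w x ∈ W := by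
    intro w hw x hx
    rw [hWmem] at hx ⊢
    intro i hi
    have h : adjoint (V i) (w x) = w (adjoint (V i) x) := by
      calc adjoint (V i) (w x) = (adjoint (V i) * w) x := rfl
        _ = (w * adjoint (V i)) x := by rw [← (hw i).eq]
        _ = w (adjoint (V i) x) := rfl
    rw [h, hx i hi, map_zero]
  set P : (Fin n → ℕ) → (H →L[ℂ] H) := fun l =>
    (((List.finRange n).filter (fun j => decide (j ∉ A))).map (fun j => V j ^ l j)).prod with hP
  -- any operator commuting with all V p commutes with P l
  have hcP : ∀ (w : H →L[ℂ] H), (∀ p, Commute w (V p)) → ∀ l, Commute w (P l) := by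
    intro w hw l
    apply Commute.list_prod_right
    intro x hx
    simp only [List.mem_map] at hx
    obtain ⟨j, -, rfl⟩ := hx
    exact (hw j).pow_right _
  -- any operator commuting with all V p and adjoint (V p) preserves D
  have hDinv : ∀ (w : H →L[ℂ] H), (∀ p, Commute w (V p)) →
      (∀ p, Commute w (adjoint (V p))) → ∀ x ∈ D, w x ∈ D := by
    intro w hw hw' x hx
    rw [hD, Submodule.mem_iInf] at hx ⊢
    intro l
    obtain ⟨y, hy, hyx⟩ := hx l
    refine ⟨w y, hWu w hw' y hy, ?_⟩
    have hcomm := (hcP w hw l).eq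
    calc (P l).toLinearMap (w y) = ((P l) * w) y := rfl
      _ = (w * (P l)) y := by rw [← hcomm]
      _ = w ((P l).toLinearMap y) := rfl
      _ = w x := by rw [hyx]
  have hu_inD : ∀ x ∈ D, u x ∈ D := hDinv u hcV hcadjV
  have hustar_inD : ∀ x ∈ D, adjoint u x ∈ D := hDinv (adjoint u) hcVstar hcadjVstar
  refine ⟨fun x hx => ⟨hu_inD x hx, hustar_inD x hx⟩, ?_⟩
  apply le_antisymm
  · intro x hx
    obtain ⟨y, hy, rfl⟩ := Submodule.mem_map.mp hx
    exact hu_inD y hy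
  · intro x hx
    refine Submodule.mem_map.mpr ⟨adjoint u x, hustar_inD x hx, ?_⟩
    calc u.toLinearMap (adjoint u x) = (u * adjoint u) x := rfl
      _ = x := by rw [hu1]; rfl
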